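/- arXiv:2210.13150 — 2 statements merged into one kernel-verified Lean document; each statement's English description precedes it below -/
import Mathlib

section
/- Let f_W be an L-layer network f_W(x) = W_L σ(W_{L-1} σ(⋯ σ(W_1 x))) with each σ being 1-Lipschitz and σ(0)=0. For any input x with ‖x‖₂ ≤ B and perturbations U₁,…,U_L satisfying ‖Uₗ‖₂ ≤ (1/L)‖Wₗ‖₂ for all l, we have ‖f_{W+U}(x) − f_W(x)‖₂ ≤ e·B·(∏ₗ ‖Wₗ‖₂)·∑ₗ ‖Uₗ‖₂/‖Wₗ‖₂. -/
open Matrix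

/-- Spectral (operator) norm of a real matrix. -/
noncomputable def specNorm {m n : Type*} [Fintype m] [Fintype n] [DecidableEq n]
    (W : Matrix m n ℝ) : ℝ :=
  ‖LinearMap.toContinuousLinearMap (Matrix.toEuclideanLin W)‖

/-- Forward pass of a layered network: `net n W φ x l` is the output after `l` layers,
where layer `l` applies the activation `φ l` followed by the linear map `W l`.
(The original network `W_L σ(W_{L-1} σ(⋯ σ(W_1 x)))` is the special case `φ 0 = id`;
all activations are assumed `1`-Lipschitz with `φ l 0 = 0`, which `id` satisfies.) -/
noncomputable def net (n : ℕ → ℕ)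
    (W : ∀ l : ℕ, Matrix (Fin (n (l + 1))) (Fin (n l)) ℝ)
    (φ : ∀ l : ℕ, EuclideanSpace ℝ (Fin (n l)) → EuclideanSpace ℝ (Fin (n l)))
    (x : EuclideanSpace ℝ (Fin (n 0))) : (l : ℕ) → EuclideanSpace ℝ (Fin (n l))
  | 0 => x
  | l + 1 => Matrix.toEuclideanLin (W l) (φ l (net n W φ x l))

lemma specNorm_nonneg {m n : Type*} [Fintype m] [Fintype n] [DecidableEq n]
    (W : Matrix m n ℝ) : 0 ≤ specNorm W := norm_nonneg _

lemma apply_le_specNorm {m n : Type*} [Fintype m] [Fintype n] [DecidableEq n]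
    (W : Matrix m n ℝ) (v : EuclideanSpace ℝ n) :
    ‖Matrix.toEuclideanLin W v‖ ≤ specNorm W * ‖v‖ := by
  simpa [specNorm] using (LinearMap.toContinuousLinearMap (Matrix.toEuclideanLin W)).le_opNorm v

lemma specNorm_add_le {m n : Type*} [Fintype m] [Fintype n] [DecidableEq n]
    (A B : Matrix m n ℝ) : specNorm (A + B) ≤ specNorm A + specNorm B := by
  unfold specNorm
  rw [map_add, map_add]
  exact norm_add_le _ _

/-- Perturbation bound for layered networks (Neyshabur et al. style). -/
theorem network_perturbation_bound (L : ℕ) (hL : 0 < L) (n : ℕ → ℕ)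
    (W U : ∀ l : ℕ, Matrix (Fin (n (l + 1))) (Fin (n l)) ℝ)
    (φ : ∀ l : ℕ, EuclideanSpace ℝ (Fin (n l)) → EuclideanSpace ℝ (Fin (n l)))
    (hφ : ∀ l, LipschitzWith 1 (φ l)) (hφ0 : ∀ l, φ l 0 = 0)
    (B : ℝ) (x : EuclideanSpace ℝ (Fin (n 0))) (hx : ‖x‖ ≤ B)
    (hW : ∀ l < L, 0 < specNorm (W l))
    (hU : ∀ l < L, specNorm (U l) ≤ specNorm (W l) / L) :
    ‖net n (fun l => W l + U l) φ x L - net n W φ x L‖ ≤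
      Real.exp 1 * B * (∏ l ∈ Finset.range L, specNorm (W l)) *
        ∑ l ∈ Finset.range L, specNorm (U l) / specNorm (W l) := by
  have hLR : (0:ℝ) < (L:ℝ) := Nat.cast_pos.mpr hL
  have hB : 0 ≤ B := le_trans (norm_nonneg x) hx
  set c : ℝ := 1 + 1 / (L:ℝ) with hc
  have hc1 : (1:ℝ) ≤ c := by
    rw [hc]
    have : (0:ℝ) ≤ 1 / (L:ℝ) := by positivity
    linarith
  have hc0 : (0:ℝ) ≤ c := by linarith
  have hφn : ∀ l (a b : EuclideanSpace ℝ (Fin (n l))), ‖φ l a - φ l b‖ ≤ ‖a - b‖ := by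
    intro l a b
    have := (hφ l).dist_le_mul a b
    simpa [dist_eq_norm] using this
  have hφ0' : ∀ l (a : EuclideanSpace ℝ (Fin (n l))), ‖φ l a‖ ≤ ‖a‖ := by
    intro l a
    simpa [hφ0 l] using hφn l a 0
  -- bound on the norm of perturbed forward pass
  have normb : ∀ k, k ≤ L →
      ‖net n (fun l => W l + U l) φ x k‖ ≤ B * c ^ k * ∏ l ∈ Finset.range k, specNorm (W l) := by
    intro k
    induction k with
    | zero => intro _; simpa [net] using hx
    | succ k ih =>
      intro hk
      have hkL : k < L := hk
      have ihk := ih (le_of_lt hkL)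
      have hWk := hW k hkL
      have hUk := hU k hkL
      have hwc : specNorm (W k) + specNorm (U k) ≤ specNorm (W k) * c := by
        rw [hc, mul_add, mul_one, mul_one_div]
        linarith
      have hprod : (0:ℝ) ≤ ∏ l ∈ Finset.range k, specNorm (W l) :=
        Finset.prod_nonneg fun l _ => specNorm_nonneg _
      calc ‖net n (fun l => W l + U l) φ x (k+1)‖
          = ‖Matrix.toEuclideanLin (W k + U k) (φ k (net n (fun l => W l + U l) φ x k))‖ := rfl
        _ ≤ specNorm (W k + U k) * ‖φ k (net n (fun l => W l + U l) φ x k)‖ :=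
            apply_le_specNorm _ _
        _ ≤ (specNorm (W k) + specNorm (U k)) * ‖net n (fun l => W l + U l) φ x k‖ :=
            mul_le_mul (specNorm_add_le _ _) (hφ0' _ _) (norm_nonneg _)
              (add_nonneg (specNorm_nonneg _) (specNorm_nonneg _))
        _ ≤ (specNorm (W k) * c) * (B * c ^ k * ∏ l ∈ Finset.range k, specNorm (W l)) :=
            mul_le_mul hwc ihk (norm_nonneg _) (mul_nonneg hWk.le hc0)
        _ = B * c ^ (k+1) * ∏ l ∈ Finset.range (k+1), specNorm (W l) := by
            rw [Finset.prod_range_succ]; ring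
  -- main difference bound
  have diffb : ∀ k, k ≤ L →
      ‖net n (fun l => W l + U l) φ x k - net n W φ x k‖ ≤
        B * c ^ k * (∏ l ∈ Finset.range k, specNorm (W l)) *
          ∑ l ∈ Finset.range k, specNorm (U l) / specNorm (W l) := by
    intro k
    induction k with
    | zero => intro _; simp [net]
    | succ k ih =>
      intro hk
      have hkL : k < L := hk
      have ihk := ih (le_of_lt hkL)
      have hWk := hW k hkL
      have hUk0 : (0:ℝ) ≤ specNorm (U k) := specNorm_nonneg _
      have hprod : (0:ℝ) ≤ ∏ l ∈ Finset.range k, specNorm (W l) :=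
        Finset.prod_nonneg fun l _ => specNorm_nonneg _
      have hsum : (0:ℝ) ≤ ∑ l ∈ Finset.range k, specNorm (U l) / specNorm (W l) :=
        Finset.sum_nonneg fun l hl =>
          div_nonneg (specNorm_nonneg _) (le_of_lt (hW l (lt_of_lt_of_le (Finset.mem_range.mp hl) (le_of_lt hkL))))
      set y' := net n (fun l => W l + U l) φ x k with hy'
      set y := net n W φ x k with hy
      have hnb := normb k (le_of_lt hkL)
      have hsplit :
          net n (fun l => W l + U l) φ x (k+1) - net n W φ x (k+1)
            = Matrix.toEuclideanLin (W k) (φ k y' - φ k y)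
              + Matrix.toEuclideanLin (U k) (φ k y') := by
        show Matrix.toEuclideanLin (W k + U k) (φ k y') - Matrix.toEuclideanLin (W k) (φ k y) = _
        rw [map_add]
        simp [map_sub]
        abel
      calc ‖net n (fun l => W l + U l) φ x (k+1) - net n W φ x (k+1)‖
          = ‖Matrix.toEuclideanLin (W k) (φ k y' - φ k y)
              + Matrix.toEuclideanLin (U k) (φ k y')‖ := by rw [hsplit]
        _ ≤ ‖Matrix.toEuclideanLin (W k) (φ k y' - φ k y)‖
              + ‖Matrix.toEuclideanLin (U k) (φ k y')‖ := norm_add_le _ _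
        _ ≤ specNorm (W k) * ‖φ k y' - φ k y‖ + specNorm (U k) * ‖φ k y'‖ :=
            add_le_add (apply_le_specNorm _ _) (apply_le_specNorm _ _)
        _ ≤ specNorm (W k) * ‖y' - y‖ + specNorm (U k) * ‖y'‖ :=
            add_le_add (mul_le_mul_of_nonneg_left (hφn _ _ _) (le_of_lt hWk))
              (mul_le_mul_of_nonneg_left (hφ0' _ _) hUk0)
        _ ≤ specNorm (W k) * (B * c ^ k * (∏ l ∈ Finset.range k, specNorm (W l)) *
              ∑ l ∈ Finset.range k, specNorm (U l) / specNorm (W l))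
              + specNorm (U k) * (B * c ^ k * ∏ l ∈ Finset.range k, specNorm (W l)) :=
            add_le_add (mul_le_mul_of_nonneg_left ihk (le_of_lt hWk))
              (mul_le_mul_of_nonneg_left hnb hUk0)
        _ ≤ B * c ^ (k+1) * (∏ l ∈ Finset.range (k+1), specNorm (W l)) *
              ∑ l ∈ Finset.range (k+1), specNorm (U l) / specNorm (W l) := by
            rw [Finset.prod_range_succ, Finset.sum_range_succ]
            have hck : c ^ k ≤ c ^ (k+1) := by
              calc c ^ k = c ^ k * 1 := by ring
                _ ≤ c ^ k * c := by
                    exact mul_le_mul_of_nonneg_left hc1 (by positivity)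
                _ = c ^ (k+1) := by ring
            have hcanc : specNorm (W k) * (specNorm (U k) / specNorm (W k)) = specNorm (U k) :=
              mul_div_cancel₀ _ (ne_of_gt hWk)
            have key : specNorm (W k) * (B * c ^ k * (∏ l ∈ Finset.range k, specNorm (W l)) *
                  ∑ l ∈ Finset.range k, specNorm (U l) / specNorm (W l))
                  + specNorm (U k) * (B * c ^ k * ∏ l ∈ Finset.range k, specNorm (W l))
                = B * c ^ k * ((∏ l ∈ Finset.range k, specNorm (W l)) * specNorm (W k)) *
                  ((∑ l ∈ Finset.range k, specNorm (U l) / specNorm (W l))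
                    + specNorm (U k) / specNorm (W k)) := by
              field_simp
            rw [key]
            have hS : (0:ℝ) ≤ (∑ l ∈ Finset.range k, specNorm (U l) / specNorm (W l))
                + specNorm (U k) / specNorm (W k) := by
              have : (0:ℝ) ≤ specNorm (U k) / specNorm (W k) :=
                div_nonneg hUk0 (le_of_lt hWk)
              linarith
            have hP : (0:ℝ) ≤ (∏ l ∈ Finset.range k, specNorm (W l)) * specNorm (W k) :=
              mul_nonneg hprod (le_of_lt hWk)
            have : B * c ^ k ≤ B * c ^ (k+1) := mul_le_mul_of_nonneg_left hck hB
            exact mul_le_mul_of_nonneg_right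
              (mul_le_mul_of_nonneg_right this hP) hS
  have hcL : c ^ L ≤ Real.exp 1 := by
    have h1 : c ≤ Real.exp (1 / (L:ℝ)) := by
      rw [hc]
      have := Real.add_one_le_exp (1 / (L:ℝ))
      linarith
    calc c ^ L ≤ (Real.exp (1 / (L:ℝ))) ^ L := pow_le_pow_left₀ hc0 h1 L
      _ = Real.exp ((L:ℝ) * (1 / (L:ℝ))) := by rw [Real.exp_nat_mul]
      _ = Real.exp 1 := by rw [mul_one_div, div_self (ne_of_gt hLR)]
  have hfin := diffb L le_rfl
  have hP : (0:ℝ) ≤ ∏ l ∈ Finset.range L, specNorm (W l) :=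
    Finset.prod_nonneg fun l _ => specNorm_nonneg _
  have hS : (0:ℝ) ≤ ∑ l ∈ Finset.range L, specNorm (U l) / specNorm (W l) :=
    Finset.sum_nonneg fun l hl =>
      div_nonneg (specNorm_nonneg _) (le_of_lt (hW l (Finset.mem_range.mp hl)))
  calc ‖net n (fun l => W l + U l) φ x L - net n W φ x L‖
      ≤ B * c ^ L * (∏ l ∈ Finset.range L, specNorm (W l)) *
          ∑ l ∈ Finset.range L, specNorm (U l) / specNorm (W l) := hfin
    _ = c ^ L * (B * (∏ l ∈ Finset.range L, specNorm (W l)) *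
          ∑ l ∈ Finset.range L, specNorm (U l) / specNorm (W l)) := by ring
    _ ≤ Real.exp 1 * (B * (∏ l ∈ Finset.range L, specNorm (W l)) *
          ∑ l ∈ Finset.range L, specNorm (U l) / specNorm (W l)) :=
        mul_le_mul_of_nonneg_right hcL (by positivity)
    _ = Real.exp 1 * B * (∏ l ∈ Finset.range L, specNorm (W l)) *
          ∑ l ∈ Finset.range L, specNorm (U l) / specNorm (W l) := by ring
end

section
/- Let Z be a chi-square random variable with k degrees of freedom (sum of k squared i.i.d. standard Gaussians), scaled by σ², i.e., Z = σ²∑_{i=1}^k Xᵢ². Then for all t ≥ 0, P(Z ≥ σ²(k + 2√(kt) + 2t)) ≤ e^{−t}. -/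
open MeasureTheory ProbabilityTheory Real
open scoped ENNReal NNReal

lemma gauss_withDensity :
    gaussianReal 0 1 =
      volume.withDensity (fun x => ((gaussianPDFReal 0 1 x).toNNReal : ℝ≥0∞)) := by
  rw [gaussianReal_of_var_ne_zero _ one_ne_zero]
  rfl

lemma pdf_mul_eq (c : ℝ) (x : ℝ) : gaussianPDFReal 0 1 x * Real.exp (c * x^2)
    = (Real.sqrt (2*π))⁻¹ * Real.exp (-(1/2 - c) * x^2) := by
  simp only [gaussianPDFReal, NNReal.coe_one, mul_one, sub_zero]
  rw [mul_assoc, ← Real.exp_add]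
  ring_nf

lemma pdf_smul_eq (c : ℝ) (x : ℝ) :
    (gaussianPDFReal 0 1 x).toNNReal • Real.exp (c * x^2)
    = (Real.sqrt (2*π))⁻¹ * Real.exp (-(1/2 - c) * x^2) := by
  simp only [NNReal.smul_def, smul_eq_mul,
    Real.coe_toNNReal _ (gaussianPDFReal_nonneg 0 1 x)]
  exact pdf_mul_eq c x

lemma gauss_sq_integrable {c : ℝ} (hc : c < 1/2) :
    Integrable (fun x => Real.exp (c * x^2)) (gaussianReal 0 1) := by
  rw [gauss_withDensity,
    integrable_withDensity_iff_integrable_smul (measurable_gaussianPDFReal 0 1).real_toNNReal]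
  have : (fun x => (gaussianPDFReal 0 1 x).toNNReal • Real.exp (c * x^2))
      = fun x => (Real.sqrt (2*π))⁻¹ * Real.exp (-(1/2 - c) * x^2) := funext (pdf_smul_eq c)
  rw [this]
  exact (integrable_exp_neg_mul_sq (by linarith)).const_mul _

lemma gauss_sq_integral {c : ℝ} (hc : c < 1/2) :
    ∫ x, Real.exp (c * x^2) ∂(gaussianReal 0 1) = (Real.sqrt (1 - 2*c))⁻¹ := by
  rw [gauss_withDensity,
    integral_withDensity_eq_integral_smul (measurable_gaussianPDFReal 0 1).real_toNNReal]
  simp only [pdf_smul_eq c]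
  rw [integral_const_mul, integral_gaussian]
  have hb : (0:ℝ) < 1/2 - c := by linarith
  have h2 : π / (1/2 - c) = (2*π) / (1 - 2*c) := by
    rw [div_eq_div_iff (by linarith) (by linarith)]
    ring
  rw [h2, Real.sqrt_div (by positivity : (0:ℝ) ≤ 2*π)]
  have hπ : Real.sqrt (2*π) ≠ 0 := by positivity
  field_simp



lemma key_ineq (k : ℕ) (hk : 0 < k) (t : ℝ) (ht : 0 ≤ t) :
    Real.exp (-((1 - (k:ℝ)/((k:ℝ) + 2*Real.sqrt ((k:ℝ)*t) + 2*t))/2)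
        * ((k:ℝ) + 2*Real.sqrt ((k:ℝ)*t) + 2*t))
      * ((Real.sqrt ((k:ℝ)/((k:ℝ) + 2*Real.sqrt ((k:ℝ)*t) + 2*t)))⁻¹)^k
      ≤ Real.exp (-t) := by
  have hkk : (0:ℝ) < (k:ℝ) := by exact_mod_cast hk
  set s := Real.sqrt (t/(k:ℝ)) with hs_def
  have hs : 0 ≤ s := Real.sqrt_nonneg _
  have hts : t = (k:ℝ) * s^2 := by
    rw [hs_def, Real.sq_sqrt (by positivity)]
    field_simp
  have hsqrt_kt : Real.sqrt ((k:ℝ)*t) = (k:ℝ)*s := by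
    rw [hts]
    rw [show (k:ℝ) * ((k:ℝ) * s^2) = ((k:ℝ)*s)^2 by ring]
    exact Real.sqrt_sq (by positivity)
  set q : ℝ := 1 + 2*s + 2*s^2 with hq_def
  have hq0 : 0 < q := by positivity
  have ha : (k:ℝ) + 2*Real.sqrt ((k:ℝ)*t) + 2*t = (k:ℝ)*q := by
    rw [hsqrt_kt, hts, hq_def]; ring
  have hka : (k:ℝ)/((k:ℝ)*q) = q⁻¹ := by field_simp
  rw [ha, hka]
  have hca : -((1 - q⁻¹)/2) * ((k:ℝ)*q) = -((k:ℝ)*(s+s^2)) := by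
    field_simp
    ring
  rw [hca, Real.sqrt_inv, inv_inv]
  have hsq : Real.sqrt q = Real.exp (Real.log q / 2) := by
    rw [← Real.log_sqrt hq0.le, Real.exp_log (Real.sqrt_pos.mpr hq0)]
  rw [hsq, ← Real.exp_nat_mul, ← Real.exp_add, Real.exp_le_exp]
  have hq_le : Real.log q ≤ 2*s := by
    rw [Real.log_le_iff_le_exp hq0]
    have h2 := Real.quadratic_le_exp_of_nonneg (x := 2*s) (by positivity)
    nlinarith
  have hklog : (k:ℝ) * (Real.log q / 2) ≤ (k:ℝ) * s := by
    nlinarith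
  rw [hts]
  nlinarith


/-- Tail bound for a scaled chi-square variable `Z = σ² ∑ᵢ Xᵢ²` with `k` degrees of
freedom: `P(Z ≥ σ²(k + 2√(kt) + 2t)) ≤ e^{−t}`. -/
theorem chi_square_tail_bound {Ω : Type*} [MeasureSpace Ω]
    [IsProbabilityMeasure (ℙ : Measure Ω)]
    {k : ℕ} (X : Fin k → Ω → ℝ) (hmeas : ∀ i, Measurable (X i))
    (hindep : iIndepFun X ℙ)
    (hgauss : ∀ i, Measure.map (X i) ℙ = gaussianReal 0 1)
    (σ : ℝ) (hσ : 0 < σ) (t : ℝ) (ht : 0 ≤ t) :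
    ℙ {ω | σ ^ 2 * ((k : ℝ) + 2 * Real.sqrt (k * t) + 2 * t)
        ≤ σ ^ 2 * ∑ i, (X i ω) ^ 2} ≤ ENNReal.ofReal (Real.exp (-t)) := by
  have hσ2 : (0:ℝ) < σ^2 := by positivity
  have hset : {ω | σ ^ 2 * ((k : ℝ) + 2 * Real.sqrt (k * t) + 2 * t)
        ≤ σ ^ 2 * ∑ i, (X i ω) ^ 2}
      = {ω | ((k:ℝ) + 2 * Real.sqrt (k * t) + 2 * t) ≤ ∑ i, (X i ω) ^ 2} := by
    ext ω
    exact mul_le_mul_iff_right₀ hσ2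
  rw [hset]
  rcases Nat.eq_zero_or_pos k with hk | hk
  · subst hk
    rcases ht.eq_or_lt with rfl | ht'
    · simp
    · have hempty : {ω : Ω | ((0:ℕ):ℝ) + 2 * Real.sqrt (((0:ℕ):ℝ) * t) + 2 * t
          ≤ ∑ i : Fin 0, (X i ω) ^ 2} = ∅ := by
        ext ω
        simp only [Set.mem_setOf_eq, Set.mem_empty_iff_false, iff_false, not_le]
        simp [Finset.univ_eq_empty]
        positivity
      rw [hempty]
      simp
  -- main case
  set a : ℝ := (k:ℝ) + 2 * Real.sqrt ((k:ℝ) * t) + 2 * t with ha_def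
  set c : ℝ := (1 - (k:ℝ)/a)/2 with hc_def
  have hkk : (0:ℝ) < (k:ℝ) := by exact_mod_cast hk
  have hka : (k:ℝ) ≤ a := by
    have h1 : 0 ≤ Real.sqrt ((k:ℝ)*t) := Real.sqrt_nonneg _
    rw [ha_def]; linarith
  have ha0 : 0 < a := lt_of_lt_of_le hkk hka
  have hc0 : 0 ≤ c := by
    have : (k:ℝ)/a ≤ 1 := (div_le_one ha0).mpr hka
    rw [hc_def]; linarith
  have hc : c < 1/2 := by
    have : 0 < (k:ℝ)/a := div_pos hkk ha0
    rw [hc_def]; linarith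
  set Y : Fin k → Ω → ℝ := fun i ω => (X i ω)^2 with hY_def
  have hYmeas : ∀ i, Measurable (Y i) := fun i => (hmeas i).pow_const 2
  have hYindep : iIndepFun Y ℙ :=
    hindep.comp (fun _ x => x^2) (fun _ => measurable_id.pow_const 2)
  have hYint : ∀ i, Integrable (fun ω => Real.exp (c * Y i ω)) ℙ := by
    intro i
    have h1 : Integrable (fun x => Real.exp (c * x^2)) (Measure.map (X i) ℙ) := by
      rw [hgauss i]; exact gauss_sq_integrable hc
    exact (integrable_map_measure
      ((by fun_prop : Measurable fun x : ℝ => Real.exp (c * x^2)).aestronglyMeasurable) (hmeas i).aemeasurable).mp h1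
  have hmgf_i : ∀ i, mgf (Y i) ℙ c = (Real.sqrt ((k:ℝ)/a))⁻¹ := by
    intro i
    have h1 : mgf (Y i) ℙ c = ∫ x, Real.exp (c * x^2) ∂(Measure.map (X i) ℙ) := by
      rw [integral_map (hmeas i).aemeasurable ((by fun_prop : Measurable fun x : ℝ => Real.exp (c * x^2)).aestronglyMeasurable)]
      rfl
    rw [h1, hgauss i, gauss_sq_integral hc]
    congr 1
    rw [hc_def]
    ring_nf
  have hint : Integrable (fun ω => Real.exp (c * (∑ i, Y i) ω)) ℙ :=
    hYindep.integrable_exp_mul_sum hYmeas (fun i _ => hYint i)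
  have hcher := measure_ge_le_exp_mul_mgf (μ := ℙ) (X := ∑ i, Y i) a hc0 hint
  rw [hYindep.mgf_sum hYmeas Finset.univ] at hcher
  simp only [hmgf_i, Finset.prod_const, Finset.card_univ, Fintype.card_fin] at hcher
  have hsset : {ω | a ≤ ∑ i, (X i ω) ^ 2} = {ω | a ≤ (∑ i, Y i) ω} := by
    ext ω
    simp [hY_def]
  rw [hsset]
  rw [ENNReal.le_ofReal_iff_toReal_le (measure_ne_top _ _) (Real.exp_nonneg _)]
  exact hcher.trans (key_ineq k hk t ht)
end
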